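/- Let X be a finitely or countably generated Hilbert A-module, let {x_i}_{i∈I} be a standard frame in X with frame operator S, and let Q ∈ End*_A(X) be invertible. Then {Qx_i}_{i∈I} is a frame in X with frame bounds A₀‖Q*^{-1}‖^{-2} and B₀‖Q*‖², where A₀, B₀ are frame bounds for {x_i}, and its frame operator is Q*^{-1} S Q^{-1} = (Q S^{-1} Q*)^{-1}; in particular Q S^{-1} Q*(x) = Σ_{i∈I} ⟨x, Qx_i⟩ Qx_i for every x ∈ X. -/

import Mathlib

open scoped RightActions

/-- The Hilbert C⋆-module class as it stood in the older Mathlib: a right `A`-module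
(action of `Aᵐᵒᵖ`), with inner product `A`-linear on the right in the sense
`⟪x, y <• a⟫ = ⟪x, y⟫ * a`. -/
class OldCStarModule (A : outParam <| Type*) (E : Type*) [NonUnitalSemiring A] [StarRing A]
    [Module ℂ A] [AddCommGroup E] [Module ℂ E] [PartialOrder A] [SMul Aᵐᵒᵖ E] [Norm A] [Norm E]
    extends Inner A E where
  inner_add_right {x} {y} {z} : inner x (y + z) = inner x y + inner x z
  inner_self_nonneg {x} : 0 ≤ inner x x
  inner_self {x} : inner x x = 0 ↔ x = 0
  inner_op_smul_right {a : A} {x y : E} : inner x (y <• a) = inner x y * a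
  inner_smul_right_complex {z : ℂ} {x} {y} : inner x (z • y) = z • inner x y
  star_inner x y : star (inner x y) = inner y x
  norm_eq_sqrt_norm_inner_self x : ‖x‖ = √‖inner x x‖

namespace OldCStarModule

section Lemmas
variable {A : Type*} [CStarAlgebra A] [PartialOrder A] [StarOrderedRing A]
variable {X : Type*} [NormedAddCommGroup X] [NormedSpace ℂ X] [Module Aᵐᵒᵖ X]
  [OldCStarModule A X]

lemma inner_add_left {x y z : X} : (inner A (x + y) z : A) = inner A x z + inner A y z := by
  rw [← star_star (r := (inner A (x + y) z : A)), ← star_inner z (x + y)]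
  rw [star_star, inner_add_right, star_add, star_inner, star_inner]

lemma inner_op_smul_left {a : A} {x y : X} : (inner A (x <• a) y : A) = star a * inner A x y := by
  rw [← star_inner y, inner_op_smul_right, star_mul, star_inner]

lemma inner_smul_left_complex {z : ℂ} {x y : X} :
    (inner A (z • x) y : A) = star z • inner A x y := by
  rw [← star_inner y, inner_smul_right_complex, star_smul, star_inner]

lemma inner_smul_left_real {z : ℝ} {x y : X} : (inner A (z • x) y : A) = z • inner A x y := by
  have h₁ : z • x = (z : ℂ) • x := by simp
  rw [h₁, inner_smul_left_complex]
  simp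

lemma inner_smul_right_real {z : ℝ} {x y : X} : (inner A x (z • y) : A) = z • inner A x y := by
  have h₁ : z • y = (z : ℂ) • y := by simp
  rw [h₁, inner_smul_right_complex]
  simp

/-- The inner product as a sesquilinear map. -/
def innerₛₗ : X →ₗ⋆[ℂ] X →ₗ[ℂ] A where
  toFun x := { toFun := fun y => inner A x y
               map_add' := fun z y => by simp [inner_add_right]
               map_smul' := fun z y => by simp [inner_smul_right_complex] }
  map_add' z y := by ext; simp [inner_add_left]
  map_smul' z y := by ext; simp [inner_smul_left_complex]

lemma innerₛₗ_apply {x y : X} : innerₛₗ (A := A) x y = inner A x y := rfl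

lemma inner_sub_right {x y z : X} : (inner A x (y - z) : A) = inner A x y - inner A x z := by
  simp only [← innerₛₗ_apply (A := A), map_sub]

lemma inner_sub_left {x y z : X} : (inner A (x - y) z : A) = inner A x z - inner A y z := by
  simp only [← innerₛₗ_apply (A := A), map_sub, LinearMap.sub_apply]

@[simp] lemma inner_zero_right {x : X} : (inner A x (0 : X) : A) = 0 :=
  (innerₛₗ (A := A) x).map_zero

@[simp] lemma inner_zero_left {x : X} : (inner A (0 : X) x : A) = 0 := by
  rw [← star_inner x 0, inner_zero_right, star_zero]

lemma norm_sq_eq {x : X} : ‖x‖ ^ 2 = ‖(inner A x x : A)‖ := by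
  rw [norm_eq_sqrt_norm_inner_self (A := A) x, Real.sq_sqrt (norm_nonneg _)]

lemma inner_mul_inner_swap_le' {x y : X} :
    (inner A y x : A) * inner A x y ≤ ‖x‖ ^ 2 • (inner A y y : A) := by
  rcases eq_or_ne x 0 with h | h
  · subst h
    simp
  · have hx : 0 < ‖x‖ := norm_pos_iff.2 h
    have h₁ : ∀ (a : A),
        (0 : A) ≤ ‖x‖ ^ 2 • (star a * a) - ‖x‖ ^ 2 • (star a * inner A x y)
                  - ‖x‖ ^ 2 • (inner A y x * a) + ‖x‖ ^ 2 • (‖x‖ ^ 2 • inner A y y) := fun a => by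
      calc (0 : A) ≤ inner A (x <• a - ‖x‖ ^ 2 • y) (x <• a - ‖x‖ ^ 2 • y) := by exact inner_self_nonneg
            _ = star a * inner A x x * a - ‖x‖ ^ 2 • (star a * inner A x y)
                  - ‖x‖ ^ 2 • (inner A y x * a) + ‖x‖ ^ 2 • (‖x‖ ^ 2 • inner A y y) := by
                      simp only [inner_sub_right, inner_op_smul_right, inner_sub_left,
                        inner_op_smul_left, inner_smul_left_real, mul_sub, mul_smul_comm,
                        inner_smul_right_real, smul_sub, sub_mul, mul_assoc, smul_mul_assoc]
                      abel
            _ ≤ ‖x‖ ^ 2 • (star a * a) - ‖x‖ ^ 2 • (star a * inner A x y)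
                  - ‖x‖ ^ 2 • (inner A y x * a) + ‖x‖ ^ 2 • (‖x‖ ^ 2 • inner A y y) := by
                      gcongr
                      calc _ ≤ ‖(inner A x x : A)‖ • (star a * a) :=
                          CStarAlgebra.star_left_conjugate_le_norm_smul (hb := star_inner x x)
                        _ = ‖x‖ ^ 2 • (star a * a) := by rw [norm_sq_eq (A := A)]
    specialize h₁ (inner A x y)
    simp only [star_inner, sub_self, zero_sub, le_neg_add_iff_add_le, add_zero] at h₁
    rwa [smul_le_smul_iff_of_pos_left (pow_pos hx _)] at h₁

variable (X) in
lemma norm_inner_le {x y : X} : ‖(inner A x y : A)‖ ≤ ‖x‖ * ‖y‖ := by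
  have := calc ‖(inner A x y : A)‖ ^ 2 = ‖(inner A y x : A) * inner A x y‖ := by
                rw [← star_inner x y, CStarRing.norm_star_mul_self, pow_two]
    _ ≤ ‖‖x‖ ^ 2 • (inner A y y : A)‖ := by
                refine CStarAlgebra.norm_le_norm_of_nonneg_of_le ?_ inner_mul_inner_swap_le'
                rw [← star_inner x y]
                exact star_mul_self_nonneg _
    _ = ‖x‖ ^ 2 * ‖(inner A y y : A)‖ := by simp [norm_smul]
    _ = ‖x‖ ^ 2 * ‖y‖ ^ 2 := by rw [norm_sq_eq (A := A) (x := y)]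
    _ = (‖x‖ * ‖y‖) ^ 2 := by simp only [mul_pow]
  refine (pow_le_pow_iff_left₀ (norm_nonneg _) ?_ (by simp)).mp this
  positivity

/-- The inner product as a continuous sesquilinear map. -/
noncomputable def innerSL : X →L⋆[ℂ] X →L[ℂ] A :=
  LinearMap.mkContinuous₂ (innerₛₗ : X →ₗ⋆[ℂ] X →ₗ[ℂ] A) 1 <| fun x y => by
    simp [innerₛₗ_apply, norm_inner_le X]

lemma innerSL_apply {x y : X} : innerSL (A := A) x y = inner A x y := rfl

lemma continuous_inner : Continuous (fun x : X × X => (inner A x.1 x.2 : A)) := by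
  simp_rw [← innerSL_apply (A := A)]
  fun_prop

end Lemmas

end OldCStarModule



section FrameAux
variable {A : Type*} [CStarAlgebra A] [PartialOrder A] [StarOrderedRing A]
variable {X : Type*} [NormedAddCommGroup X] [NormedSpace ℂ X] [Module Aᵐᵒᵖ X]
  [OldCStarModule A X] [CompleteSpace X]

set_option maxHeartbeats 1000000 in
set_option synthInstance.maxHeartbeats 400000 in
/-- Key inequality: for an adjointable operator `T`, `⟪T x, T x⟫ ≤ ‖T‖² • ⟪x, x⟫`. -/
lemma frame_key (T T' : X →L[ℂ] X)
    (hadj : ∀ x y : X, (inner A (T x) y : A) = inner A x (T' y)) (x : X) :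
    (inner A (T x) (T x) : A) ≤ (‖T‖ ^ 2) • (inner A x x : A) := by
  have hadj' : ∀ x y : X, (inner A (T' x) y : A) = inner A x (T y) := by
    intro x y
    have h := congrArg star (hadj y x)
    rw [OldCStarModule.star_inner, OldCStarModule.star_inner] at h
    exact h.symm
  -- main claim for any c > ‖T‖²
  have main : ∀ c : ℝ, ‖T‖ ^ 2 < c → (inner A (T x) (T x) : A) ≤ c • (inner A x x : A) := by
    intro c hc
    have hc0 : 0 < c := lt_of_le_of_lt (sq_nonneg _) hc
    -- the operator P = T' ∘ T
    set P : X →L[ℂ] X := T' * T with hP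
    have hPapp : ∀ v : X, P v = T' (T v) := fun v => rfl
    have hPsym : ∀ v w : X, (inner A (P v) w : A) = inner A v (P w) := by
      intro v w
      rw [hPapp, hPapp, hadj', ← hadj]
    have hT'le : ∀ v : X, ‖T' v‖ ≤ ‖T‖ * ‖v‖ := by
      intro v
      have h2 : ‖T' v‖ ^ 2 = ‖(inner A (T' v) (T' v) : A)‖ := OldCStarModule.norm_sq_eq
      rw [hadj'] at h2
      have h3 : ‖(inner A v (T (T' v)) : A)‖ ≤ ‖v‖ * ‖T (T' v)‖ := OldCStarModule.norm_inner_le X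
      have h4 : ‖T (T' v)‖ ≤ ‖T‖ * ‖T' v‖ := T.le_opNorm _
      rcases (norm_nonneg (T' v)).eq_or_lt with h0 | h0
      · rw [← h0]; positivity
      · have h5 : ‖T' v‖ ^ 2 ≤ ‖v‖ * (‖T‖ * ‖T' v‖) := by
          calc ‖T' v‖ ^ 2 = ‖(inner A v (T (T' v)) : A)‖ := h2
            _ ≤ ‖v‖ * ‖T (T' v)‖ := h3
            _ ≤ ‖v‖ * (‖T‖ * ‖T' v‖) := mul_le_mul_of_nonneg_left h4 (norm_nonneg _)
        nlinarith [norm_nonneg v, norm_nonneg (T' v)]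
    have hPle : ∀ v : X, ‖P v‖ ≤ ‖T‖ ^ 2 * ‖v‖ := by
      intro v
      calc ‖P v‖ = ‖T' (T v)‖ := rfl
        _ ≤ ‖T‖ * ‖T v‖ := hT'le _
        _ ≤ ‖T‖ * (‖T‖ * ‖v‖) := mul_le_mul_of_nonneg_left (T.le_opNorm v) (norm_nonneg T)
        _ = ‖T‖ ^ 2 * ‖v‖ := by ring
    set u : X →L[ℂ] X := c⁻¹ • P with hu
    have huapp : ∀ v : X, u v = c⁻¹ • P v := fun v => rfl
    have husym : ∀ v w : X, (inner A (u v) w : A) = inner A v (u w) := by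
      intro v w
      rw [huapp, huapp, OldCStarModule.inner_smul_left_real, OldCStarModule.inner_smul_right_real,
        hPsym]
    have hunorm : ‖u‖ < 1 := by
      have h0 : ‖P‖ ≤ ‖T‖ ^ 2 :=
        ContinuousLinearMap.opNorm_le_bound _ (by positivity) (fun v => hPle v)
      have h1 : ‖u‖ ≤ c⁻¹ * ‖T‖ ^ 2 := by
        refine le_trans (ContinuousLinearMap.opNorm_smul_le _ _) ?_
        rw [Real.norm_eq_abs, abs_of_nonneg (by positivity : (0:ℝ) ≤ c⁻¹)]
        exact mul_le_mul_of_nonneg_left h0 (by positivity)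
      have h2 : c⁻¹ * ‖T‖ ^ 2 < 1 := by
        rw [inv_mul_lt_iff₀ hc0, mul_one]; exact hc
      exact lt_of_le_of_lt h1 h2
    -- construct a symmetric square root of 1 - u via the Banach fixed point theorem
    set r : ℝ := ‖u‖ with hr
    have hr0 : 0 ≤ r := norm_nonneg _
    have hr1 : r < 1 := hunorm
    set m : ℝ := 1 - Real.sqrt (1 - r) with hm
    have hsq : Real.sqrt (1 - r) ^ 2 = 1 - r := Real.sq_sqrt (by linarith)
    have hs_pos : 0 < Real.sqrt (1 - r) := Real.sqrt_pos.2 (by linarith)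
    have hs_le : Real.sqrt (1 - r) ≤ 1 := by nlinarith [hsq, hs_pos]
    have hm0 : 0 ≤ m := by rw [hm]; linarith
    have hm1 : m < 1 := by rw [hm]; linarith
    have hmsq : r + m ^ 2 = 2 * m := by rw [hm]; nlinarith [hsq]
    -- the closed invariant set
    set M : Set (X →L[ℂ] X) :=
      {y | ‖y‖ ≤ m ∧ ∀ v w : X, (inner A (y v) w : A) = inner A v (y w)} with hM
    have hev : ∀ v : X, Continuous fun y : X →L[ℂ] X => y v :=
      fun v => (ContinuousLinearMap.apply ℂ X v).continuous
    have hMclosed : IsClosed M := by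
      apply IsClosed.inter
      · exact isClosed_le continuous_norm continuous_const
      · have hMeq : {y : X →L[ℂ] X | ∀ v w : X, (inner A (y v) w : A) = inner A v (y w)}
            = ⋂ (v : X), ⋂ (w : X), {y | (inner A (y v) w : A) = inner A v (y w)} := by
          ext y; simp [Set.mem_iInter]
        rw [show (fun y : X →L[ℂ] X => ∀ v w : X, (inner A (y v) w : A) = inner A v (y w))
            = {y : X →L[ℂ] X | ∀ v w : X, (inner A (y v) w : A) = inner A v (y w)} from rfl, hMeq]
        refine isClosed_iInter fun v => isClosed_iInter fun w => isClosed_eq ?_ ?_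
        · exact OldCStarModule.continuous_inner.comp ((hev v).prodMk continuous_const)
        · exact OldCStarModule.continuous_inner.comp (continuous_const.prodMk (hev w))
    have hM0 : (0 : X →L[ℂ] X) ∈ M := by
      constructor
      · simpa using hm0
      · intro v w; simp
    haveI : Nonempty M := ⟨⟨0, hM0⟩⟩
    haveI : CompleteSpace M := hMclosed.completeSpace_coe
    -- the contraction
    have hFmem : ∀ y : M, (2⁻¹ : ℝ) • (u + y.1 * y.1) ∈ M := by
      rintro ⟨y, hy1, hy2⟩
      constructor
      · have h1 : ‖(2⁻¹ : ℝ) • (u + y * y)‖ ≤ 2⁻¹ * (r + m * m) := by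
          refine le_trans (ContinuousLinearMap.opNorm_smul_le _ _) ?_
          rw [Real.norm_eq_abs, abs_of_nonneg (by norm_num : (0:ℝ) ≤ 2⁻¹)]
          apply mul_le_mul_of_nonneg_left _ (by norm_num)
          calc ‖u + y * y‖ ≤ ‖u‖ + ‖y * y‖ := norm_add_le _ _
            _ ≤ r + ‖y‖ * ‖y‖ := add_le_add le_rfl (norm_mul_le y y)
            _ ≤ r + m * m := by nlinarith [norm_nonneg y]
        have h2 : 2⁻¹ * (r + m * m) = m := by nlinarith [hmsq]
        rw [h2] at h1; exact h1
      · intro v w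
        have happ : ((2⁻¹ : ℝ) • (u + y * y)) v = (2⁻¹ : ℝ) • (u v + y (y v)) := rfl
        have happ' : ((2⁻¹ : ℝ) • (u + y * y)) w = (2⁻¹ : ℝ) • (u w + y (y w)) := rfl
        rw [happ, happ', OldCStarModule.inner_smul_left_real, OldCStarModule.inner_smul_right_real,
          OldCStarModule.inner_add_left, OldCStarModule.inner_add_right, husym, hy2, hy2]
    set F : M → M := fun y => ⟨(2⁻¹ : ℝ) • (u + y.1 * y.1), hFmem y⟩ with hF
    have hLip : ∀ y z : M, dist (F y) (F z) ≤ m * dist y z := by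
      rintro ⟨y, hy1, -⟩ ⟨z, hz1, -⟩
      show dist ((2⁻¹ : ℝ) • (u + y * y)) ((2⁻¹ : ℝ) • (u + z * z)) ≤ m * dist y z
      rw [dist_eq_norm, dist_eq_norm]
      have hdiff : (2⁻¹ : ℝ) • (u + y * y) - (2⁻¹ : ℝ) • (u + z * z)
          = (2⁻¹ : ℝ) • (y * (y - z) + (y - z) * z) := by
        rw [← smul_sub]; congr 1; noncomm_ring
      rw [hdiff]
      refine le_trans (ContinuousLinearMap.opNorm_smul_le _ _) ?_
      rw [Real.norm_eq_abs, abs_of_nonneg (by norm_num : (0:ℝ) ≤ 2⁻¹)]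
      calc 2⁻¹ * ‖y * (y - z) + (y - z) * z‖
          ≤ 2⁻¹ * (‖y‖ * ‖y - z‖ + ‖y - z‖ * ‖z‖) :=
            mul_le_mul_of_nonneg_left
              (le_trans (norm_add_le _ _) (add_le_add (norm_mul_le _ _) (norm_mul_le _ _)))
              (by norm_num)
        _ ≤ 2⁻¹ * (m * ‖y - z‖ + ‖y - z‖ * m) := by
            have := norm_nonneg (y - z)
            nlinarith [norm_nonneg y, norm_nonneg z]
        _ = m * ‖y - z‖ := by ring
    have hcontract : ContractingWith m.toNNReal F := by
      constructor
      · have h : (m.toNNReal : ℝ) < 1 := by rw [Real.coe_toNNReal m hm0]; exact hm1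
        exact_mod_cast h
      · refine LipschitzWith.of_dist_le_mul fun y z => ?_
        rw [Real.coe_toNNReal m hm0]
        exact hLip y z
    set z : M := hcontract.fixedPoint F with hz
    have hzfix : F z = z := hcontract.fixedPoint_isFixedPt
    have hzeq : (2⁻¹ : ℝ) • (u + z.1 * z.1) = z.1 := congrArg Subtype.val hzfix
    have hzapp : ∀ v : X, z.1 (z.1 v) = (2 : ℝ) • z.1 v - u v := by
      intro v
      have h2 : (2⁻¹ : ℝ) • (u v + z.1 (z.1 v)) = z.1 v := by
        have h1 : ((2⁻¹ : ℝ) • (u + z.1 * z.1)) v = z.1 v := by rw [hzeq]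
        exact h1
      have h3 : (2:ℝ) • (2⁻¹:ℝ) • (u v + z.1 (z.1 v)) = (2:ℝ) • z.1 v :=
        congrArg (fun w : X => (2:ℝ) • w) h2
      rw [smul_smul] at h3
      norm_num at h3
      rw [eq_sub_iff_add_eq, add_comm]
      exact h3
    -- positivity computation
    have hzsym := z.2.2
    have hRpos : (0 : A) ≤ inner A x x - inner A x (u x) := by
      have h0 : (0 : A) ≤ inner A (x - z.1 x) (x - z.1 x) := OldCStarModule.inner_self_nonneg
      have hexp : (inner A (x - z.1 x) (x - z.1 x) : A) = inner A x x - inner A x (u x) := by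
        rw [OldCStarModule.inner_sub_left, OldCStarModule.inner_sub_right,
          OldCStarModule.inner_sub_right, hzsym x x, hzsym x (z.1 x), hzapp x,
          OldCStarModule.inner_sub_right, OldCStarModule.inner_smul_right_real]
        have h2s : (2 : ℝ) • (inner A x (z.1 x) : A) = inner A x (z.1 x) + inner A x (z.1 x) :=
          two_smul ℝ _
        rw [h2s]; abel
      rwa [hexp] at h0
    have hPx : (inner A x (P x) : A) = inner A (T x) (T x) := by
      rw [show P x = T' (T x) from rfl, ← hadj]
    have hux : (inner A x (u x) : A) = c⁻¹ • inner A (T x) (T x) := by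
      rw [huapp, OldCStarModule.inner_smul_right_real, hPx]
    have hfin : c⁻¹ • (inner A (T x) (T x) : A) ≤ inner A x x := by
      rw [← hux]; exact sub_nonneg.1 hRpos
    calc (inner A (T x) (T x) : A) = c • c⁻¹ • (inner A (T x) (T x) : A) := by
          rw [smul_smul, mul_inv_cancel₀ (ne_of_gt hc0), one_smul]
      _ ≤ c • (inner A x x : A) := smul_le_smul_of_nonneg_left hfin hc0.le
  -- take the limit c → ‖T‖²⁺
  have htend : Filter.Tendsto (fun c : ℝ => c • (inner A x x : A))
      (nhdsWithin (‖T‖ ^ 2) (Set.Ioi (‖T‖ ^ 2))) (nhds ((‖T‖ ^ 2) • (inner A x x : A))) :=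
    ((continuous_id.smul continuous_const).tendsto _).mono_left nhdsWithin_le_nhds
  refine ge_of_tendsto htend ?_
  exact Filter.eventually_of_mem self_mem_nhdsWithin fun c hc => main c hc





end FrameAux

/-- If `{x i}` is a standard frame with bounds `A₀, B₀` and frame operator
`S` in a Hilbert `A`-module `X` and `Q ∈ End*_A(X)` is invertible (with adjoint `Q*`,
inverse `Q⁻¹`, and `(Q*)⁻¹ = (Q⁻¹)*`), then `{Q (x i)}` is a frame in `X` with bounds
`A₀‖Q*⁻¹‖⁻²` and `B₀‖Q*‖²`, with frame operator `Q*⁻¹ S Q⁻¹ = (Q S⁻¹ Q*)⁻¹`; in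
particular `Q S⁻¹ Q* x = Σᵢ ⟨x, Q xᵢ⟩ (Q xᵢ)` for every `x ∈ X`.  (Mathlib's convention
for the `A`-valued inner product is conjugate-linear in the first variable, and the
`A`-module action is written as a right action.) -/
theorem cstar_module_frame_under_invertible_operator
    {A : Type*} [CStarAlgebra A] [PartialOrder A] [StarOrderedRing A]
    {X : Type*}
    [NormedAddCommGroup X] [NormedSpace ℂ X] [Module Aᵐᵒᵖ X] [OldCStarModule A X]
      [CompleteSpace X]
    {I : Type*} [Countable I]
    -- the standard frame
    (xs : I → X) (A₀ B₀ : ℝ) (hA₀ : 0 < A₀) (hAB₀ : A₀ ≤ B₀)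
    (hxs_sum : ∀ x : X, Summable fun i => (inner A x (xs i) : A) * (inner A (xs i) x : A))
    (hxs_lower : ∀ x : X,
      A₀ • (inner A x x : A) ≤ ∑' i, (inner A x (xs i) : A) * (inner A (xs i) x : A))
    (hxs_upper : ∀ x : X,
      ∑' i, (inner A x (xs i) : A) * (inner A (xs i) x : A) ≤ B₀ • (inner A x x : A))
    -- the frame operator `S`, with inverse `Sinv`
    (S : X →L[ℂ] X) (Sinv : X →L[ℂ] X)
    (hS_mod : ∀ (a : A) (x : X), S (x <• a) = S x <• a)
    (hS_inv : ∀ x, Sinv (S x) = x) (hS_inv' : ∀ x, S (Sinv x) = x)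
    (hS : ∀ x : X, HasSum (fun i => xs i <• (inner A (S (xs i)) x : A)) x)
    -- the invertible adjointable operator `Q`, with adjoint `Qadj`, inverse `Qinv`,
    -- and `Qadjinv = (Q*)⁻¹`
    (Q Qinv Qadj Qadjinv : X →L[ℂ] X)
    (hQ_mod : ∀ (a : A) (x : X), Q (x <• a) = Q x <• a)
    (hQ_adj : ∀ x x' : X, (inner A (Q x) x' : A) = inner A x (Qadj x'))
    (hQ_inv : ∀ x, Qinv (Q x) = x) (hQ_inv' : ∀ x, Q (Qinv x) = x)
    (hQadj_inv : ∀ x, Qadjinv (Qadj x) = x) (hQadj_inv' : ∀ x, Qadj (Qadjinv x) = x) :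
    -- conclusion (1): `{Q (x i)}` is a frame with bounds `A₀‖Q*⁻¹‖⁻²` and `B₀‖Q*‖²`
    (∀ x : X,
      Summable (fun i => (inner A x (Q (xs i)) : A) * (inner A (Q (xs i)) x : A)) ∧
      (A₀ / ‖Qadjinv‖ ^ 2) • (inner A x x : A)
        ≤ ∑' i, (inner A x (Q (xs i)) : A) * (inner A (Q (xs i)) x : A) ∧
      ∑' i, (inner A x (Q (xs i)) : A) * (inner A (Q (xs i)) x : A)
        ≤ (B₀ * ‖Qadj‖ ^ 2) • (inner A x x : A)) ∧
    -- conclusion (2): its frame operator is `Q*⁻¹ S Q⁻¹ …`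
    (∀ x : X, HasSum
      (fun i => Q (xs i) <• (inner A (Qadjinv (S (Qinv (Q (xs i))))) x : A)) x) ∧
    -- … which equals `(Q S⁻¹ Q*)⁻¹`
    (∀ x : X, Qadjinv (S (Qinv (Q (Sinv (Qadj x))))) = x) ∧
    (∀ x : X, Q (Sinv (Qadj (Qadjinv (S (Qinv x))))) = x) ∧
    -- conclusion (3): `Q S⁻¹ Q* x = Σᵢ ⟨x, Q xᵢ⟩ (Q xᵢ)`
    (∀ x : X, HasSum (fun i => Q (xs i) <• (inner A (Q (xs i)) x : A))
      (Q (Sinv (Qadj x)))) := by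
  have hB₀ : (0:ℝ) ≤ B₀ := le_trans hA₀.le hAB₀
  -- adjoint relations
  have hQ_adj' : ∀ x y : X, (inner A (Qadj x) y : A) = inner A x (Q y) := by
    intro x y
    have h := congrArg star (hQ_adj y x)
    rw [OldCStarModule.star_inner, OldCStarModule.star_inner] at h
    exact h.symm
  have hQinv_adj : ∀ x y : X, (inner A (Qinv x) y : A) = inner A x (Qadjinv y) := by
    intro x y
    calc (inner A (Qinv x) y : A) = inner A (Qinv x) (Qadj (Qadjinv y)) := by rw [hQadj_inv']
      _ = inner A (Q (Qinv x)) (Qadjinv y) := (hQ_adj _ _).symm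
      _ = inner A x (Qadjinv y) := by rw [hQ_inv']
  have hQadjinv_adj : ∀ x y : X, (inner A (Qadjinv x) y : A) = inner A x (Qinv y) := by
    intro x y
    have h := congrArg star (hQinv_adj y x)
    rw [OldCStarModule.star_inner, OldCStarModule.star_inner] at h
    exact h.symm
  -- S is self-adjoint
  have hS' : ∀ v : X, HasSum (fun i => S (xs i) <• (inner A (S (xs i)) v : A)) (S v) := by
    intro v
    have h := S.hasSum (hS v)
    simpa only [hS_mod] using h
  have hSinner : ∀ w v : X,
      HasSum (fun i => (inner A w (S (xs i)) : A) * (inner A (S (xs i)) v : A))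
        (inner A w (S v) : A) := by
    intro w v
    have h := (OldCStarModule.innerSL (A := A) w).hasSum (hS' v)
    simpa only [OldCStarModule.innerSL_apply, OldCStarModule.inner_op_smul_right] using h
  have hSsym : ∀ v w : X, (inner A (S v) w : A) = inner A v (S w) := by
    intro v w
    have h1 := hSinner v w
    have h2 := (hSinner w v).star
    simp only [star_mul, OldCStarModule.star_inner] at h2
    exact h2.unique h1
  have hSinvsym : ∀ v w : X, (inner A (Sinv v) w : A) = inner A v (Sinv w) := by
    intro v w
    calc (inner A (Sinv v) w : A) = inner A (Sinv v) (S (Sinv w)) := by rw [hS_inv']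
      _ = inner A (S (Sinv v)) (Sinv w) := (hSsym _ _).symm
      _ = inner A v (Sinv w) := by rw [hS_inv']
  refine ⟨?_, ?_, ?_, ?_, ?_⟩
  · -- conclusion (1)
    intro x
    have hterm : ∀ i, (inner A x (Q (xs i)) : A) * (inner A (Q (xs i)) x : A)
        = (inner A (Qadj x) (xs i) : A) * (inner A (xs i) (Qadj x) : A) := by
      intro i
      have h1 : (inner A x (Q (xs i)) : A) = inner A (Qadj x) (xs i) := by
        have h := congrArg star (hQ_adj (xs i) x)
        rw [OldCStarModule.star_inner, OldCStarModule.star_inner] at h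
        exact h
      rw [h1, hQ_adj (xs i) x]
    have hsummable : Summable (fun i => (inner A x (Q (xs i)) : A) * (inner A (Q (xs i)) x : A)) :=
      (hxs_sum (Qadj x)).congr fun i => (hterm i).symm
    have heq : ∑' i, (inner A x (Q (xs i)) : A) * (inner A (Q (xs i)) x : A)
        = ∑' i, (inner A (Qadj x) (xs i) : A) * (inner A (xs i) (Qadj x) : A) := tsum_congr hterm
    refine ⟨hsummable, ?_, ?_⟩
    · -- lower bound
      rcases eq_or_lt_of_le (norm_nonneg Qadjinv) with h0 | h0
      · -- degenerate case `Qadjinv = 0`, so `X = 0`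
        have hQ0 : Qadjinv = 0 := by
          rw [← norm_eq_zero]; exact h0.symm
        have hx0 : x = 0 := by
          have h := hQadj_inv x
          rw [hQ0] at h
          simpa using h.symm
        subst hx0
        simp
      · have hn : (0:ℝ) < ‖Qadjinv‖ ^ 2 := by positivity
        have hk : (inner A x x : A) ≤ (‖Qadjinv‖ ^ 2) • (inner A (Qadj x) (Qadj x) : A) := by
          have h := frame_key Qadjinv Qinv hQadjinv_adj (Qadj x)
          rwa [hQadj_inv] at h
        rw [heq]
        calc (A₀ / ‖Qadjinv‖ ^ 2) • (inner A x x : A)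
            ≤ (A₀ / ‖Qadjinv‖ ^ 2) • ((‖Qadjinv‖ ^ 2) • (inner A (Qadj x) (Qadj x) : A)) :=
              smul_le_smul_of_nonneg_left hk (by positivity)
          _ = A₀ • (inner A (Qadj x) (Qadj x) : A) := by
              rw [smul_smul, div_mul_cancel₀ _ (ne_of_gt hn)]
          _ ≤ ∑' i, (inner A (Qadj x) (xs i) : A) * (inner A (xs i) (Qadj x) : A) :=
              hxs_lower (Qadj x)
    · -- upper bound
      rw [heq]
      calc ∑' i, (inner A (Qadj x) (xs i) : A) * (inner A (xs i) (Qadj x) : A)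
          ≤ B₀ • (inner A (Qadj x) (Qadj x) : A) := hxs_upper (Qadj x)
        _ ≤ B₀ • ((‖Qadj‖ ^ 2) • (inner A x x : A)) :=
            smul_le_smul_of_nonneg_left (frame_key Qadj Q hQ_adj' x) hB₀
        _ = (B₀ * ‖Qadj‖ ^ 2) • (inner A x x : A) := by rw [smul_smul]
  · -- conclusion (2)
    intro x
    have h := Q.hasSum (hS (Qinv x))
    simp only [hQ_mod, hQ_inv'] at h
    have hfun : (fun i => Q (xs i) <• (inner A (Qadjinv (S (Qinv (Q (xs i))))) x : A))
        = fun i => Q (xs i) <• (inner A (S (xs i)) (Qinv x) : A) := by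
      funext i
      rw [hQ_inv, hQadjinv_adj]
    rw [hfun]
    exact h
  · -- conclusion (3a)
    intro x
    rw [hQ_inv, hS_inv', hQadj_inv]
  · -- conclusion (3b)
    intro x
    rw [hQadj_inv', hS_inv, hQ_inv']
  · -- conclusion (4)
    intro x
    have h := Q.hasSum (hS (Sinv (Qadj x)))
    simp only [hQ_mod] at h
    have hfun : (fun i => Q (xs i) <• (inner A (Q (xs i)) x : A))
        = fun i => Q (xs i) <• (inner A (S (xs i)) (Sinv (Qadj x)) : A) := by
      funext i
      rw [hQ_adj (xs i) x, hSsym, hS_inv']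
    rw [hfun]
    exact h
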